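/- Let I ⊂ ℝ be a compact interval, let f : I → ℝ be C² with 0 < c₁ ≤ |f''(x)| ≤ c₂ for all x ∈ I, and let δ ∈ (0,1). Then there exists a constant K > 0, depending only on f, I and δ, such that for every real r ≥ 1 and every nonzero integer β₂ with |β₂| ≤ r, the number of integer pairs (β₀, β₁) with max(|β₀|, |β₁|) ≤ r for which there exists x ∈ I satisfying both |β₂ f(x) + β₁ x + β₀| ≤ r^{−δ} and |β₂ f'(x) + β₁| ≤ r^{−δ} is at most K·|β₂|. -/

import Mathlib

open MeasureTheory Set

/-- **Counting lemma ([DB_inh_dim], p. 349).** For nonzero `β₂` with `|β₂| ≤ r`,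
the number of integer pairs `(β₀, β₁)` with `max(|β₀|,|β₁|) ≤ r` for which the
system `|β₂f(x) + β₁x + β₀| ≤ r^(-δ)`, `|β₂f'(x) + β₁| ≤ r^(-δ)` has a solution
`x ∈ I` is `≪ |β₂|`. -/
theorem counting_beta_pairs
    (a b : ℝ) (hab : a ≤ b)
    (f : ℝ → ℝ) (hf : ContDiff ℝ 2 f)
    (c₁ c₂ : ℝ) (hc₁ : 0 < c₁)
    (hbound : ∀ x ∈ Icc a b, c₁ ≤ |deriv (deriv f) x| ∧ |deriv (deriv f) x| ≤ c₂)
    (δ : ℝ) (hδ0 : 0 < δ) (hδ1 : δ < 1) :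
    ∃ K > (0 : ℝ), ∀ r : ℝ, 1 ≤ r → ∀ β₂ : ℤ, β₂ ≠ 0 → (|β₂| : ℝ) ≤ r →
      ∀ S : Set (ℤ × ℤ),
        S = {p : ℤ × ℤ | (max |p.1| |p.2| : ℝ) ≤ r ∧ ∃ x ∈ Icc a b,
          |(β₂ : ℝ) * f x + (p.2 : ℝ) * x + (p.1 : ℝ)| ≤ r ^ (-δ) ∧
          |(β₂ : ℝ) * deriv f x + (p.2 : ℝ)| ≤ r ^ (-δ)} →
        S.Finite ∧ (S.ncard : ℝ) ≤ K * (|β₂| : ℝ) := by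
  classical
  -- smoothness consequences
  have hd1 : ContDiff ℝ 1 (deriv f) := by
    have h : (2 : WithTop ℕ∞) = 1 + 1 := by norm_num
    rw [h, contDiff_succ_iff_deriv] at hf
    exact hf.2.2
  have hfdiff : Differentiable ℝ f := hf.differentiable (by norm_num)
  have hf'cont : Continuous (deriv f) := hd1.continuous
  have hf''cont : Continuous (deriv (deriv f)) := by
    rw [contDiff_one_iff_deriv] at hd1; exact hd1.2
  -- bound on |f'|
  obtain ⟨M, hM⟩ := isCompact_Icc.exists_bound_of_continuousOn
    (s := Icc a b) hf'cont.continuousOn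
  have hM0 : 0 ≤ M := le_trans (norm_nonneg _) (hM a (left_mem_Icc.mpr hab))
  -- f'' has constant sign on Icc a b
  have hsign : (∀ x ∈ Icc a b, 0 < deriv (deriv f) x) ∨
      (∀ x ∈ Icc a b, deriv (deriv f) x < 0) := by
    by_cases hpos : ∀ x ∈ Icc a b, 0 < deriv (deriv f) x
    · exact Or.inl hpos
    · right
      push_neg at hpos
      obtain ⟨x₀, hx₀, hx₀le⟩ := hpos
      intro x hx
      by_contra hge
      push_neg at hge
      have hsub : uIcc x₀ x ⊆ Icc a b := uIcc_subset_Icc hx₀ hx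
      have h0 : (0:ℝ) ∈ uIcc (deriv (deriv f) x₀) (deriv (deriv f) x) := by
        rw [Set.mem_uIcc]; left; exact ⟨hx₀le, hge⟩
      obtain ⟨z, hz, hz0⟩ := intermediate_value_uIcc
        (hf''cont.continuousOn.mono hsub) h0
      have hzc := (hbound z (hsub hz)).1
      rw [hz0] at hzc; simp at hzc; linarith
  -- f' monotone or antitone
  have hmono : MonotoneOn (deriv f) (Icc a b) ∨ AntitoneOn (deriv f) (Icc a b) := by
    rcases hsign with h | h
    · exact Or.inl ((strictMonoOn_of_deriv_pos (convex_Icc a b) hf'cont.continuousOn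
        (fun x hx => h x (interior_subset hx))).monotoneOn)
    · exact Or.inr ((strictAntiOn_of_deriv_neg (convex_Icc a b) hf'cont.continuousOn
        (fun x hx => h x (interior_subset hx))).antitoneOn)
  -- constants
  set n : ℕ := ⌈b - a + 2⌉₊ with hn
  set Mc : ℕ := ⌈M⌉₊ with hMc
  refine ⟨((2*n+1) * (2*Mc+3) : ℕ), by positivity, ?_⟩
  intro r hr β₂ hβ₂ hβ₂r S hS
  have hr0 : (0:ℝ) < r := lt_of_lt_of_le one_pos hr
  set ε : ℝ := r ^ (-δ) with hε
  have hε1 : ε ≤ 1 := Real.rpow_le_one_of_one_le_of_nonpos hr (by linarith)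
  have hε0 : 0 ≤ ε := Real.rpow_nonneg hr0.le _
  -- β₂ f' monotone or antitone
  have hbm : MonotoneOn (fun t => (β₂:ℝ) * deriv f t) (Icc a b) ∨
      AntitoneOn (fun t => (β₂:ℝ) * deriv f t) (Icc a b) := by
    rcases le_total (0:ℝ) (β₂:ℝ) with hb2 | hb2 <;> rcases hmono with h | h
    · exact Or.inl fun s hs t ht hst => mul_le_mul_of_nonneg_left (h hs ht hst) hb2
    · exact Or.inr fun s hs t ht hst => mul_le_mul_of_nonneg_left (h hs ht hst) hb2
    · exact Or.inr fun s hs t ht hst => mul_le_mul_of_nonpos_left (h hs ht hst) hb2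
    · exact Or.inl fun s hs t ht hst => mul_le_mul_of_nonpos_left (h hs ht hst) hb2
  -- core lemma, ordered version
  have key' : ∀ (β₁ β₀ β₀' : ℤ) (x y : ℝ), x ∈ Icc a b → y ∈ Icc a b → x ≤ y →
      |(β₂ : ℝ) * f x + (β₁ : ℝ) * x + (β₀ : ℝ)| ≤ ε →
      |(β₂ : ℝ) * deriv f x + (β₁ : ℝ)| ≤ ε →
      |(β₂ : ℝ) * f y + (β₁ : ℝ) * y + (β₀' : ℝ)| ≤ ε →
      |(β₂ : ℝ) * deriv f y + (β₁ : ℝ)| ≤ ε →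
      |(β₀ : ℝ) - (β₀' : ℝ)| ≤ b - a + 2 := by
    intro β₁ β₀ β₀' x y hx hy hxy h1 h2 h3 h4
    have hIcc : Icc x y ⊆ Icc a b := Icc_subset_Icc hx.1 hy.2
    have hderiv : ∀ t ∈ Icc x y, HasDerivWithinAt
        (fun t => (β₂:ℝ) * f t + (β₁:ℝ) * t)
        ((β₂:ℝ) * deriv f t + (β₁:ℝ)) (Icc x y) t := by
      intro t _
      have h1' : HasDerivAt f (deriv f t) t := (hfdiff t).hasDerivAt
      have := (h1'.const_mul (β₂:ℝ)).add ((hasDerivAt_id t).const_mul (β₁:ℝ))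
      have h := this.hasDerivWithinAt (s := Icc x y); simp only [mul_one] at h; exact h
    have hboundg : ∀ t ∈ Icc x y, ‖(β₂:ℝ) * deriv f t + (β₁:ℝ)‖ ≤ ε := by
      intro t ht
      have htm : t ∈ Icc a b := hIcc ht
      have h2' := abs_le.mp h2
      have h4' := abs_le.mp h4
      rw [Real.norm_eq_abs, abs_le]
      rcases hbm with h | h
      · have l1 := h hx htm ht.1
        have l2 := h htm hy ht.2
        simp only at l1 l2
        constructor <;> linarith
      · have l1 := h hx htm ht.1
        have l2 := h htm hy ht.2
        simp only at l1 l2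
        constructor <;> linarith
    have hmvt := (convex_Icc x y).norm_image_sub_le_of_norm_hasDerivWithin_le hderiv hboundg
      (left_mem_Icc.mpr hxy) (right_mem_Icc.mpr hxy)
    rw [Real.norm_eq_abs, Real.norm_eq_abs] at hmvt
    have hyx : |y - x| = y - x := abs_of_nonneg (by linarith)
    rw [hyx] at hmvt
    have hba : ε * (y - x) ≤ b - a := by
      have h5 : y - x ≤ b - a := by
        have := hx.1; have := hy.2; linarith
      calc ε * (y - x) ≤ 1 * (y - x) := by
            apply mul_le_mul_of_nonneg_right hε1 (by linarith)
        _ = y - x := one_mul _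
        _ ≤ b - a := h5
    have hmvt' := abs_le.mp (le_trans hmvt hba)
    have h1' := abs_le.mp h1
    have h3' := abs_le.mp h3
    rw [abs_le]
    constructor <;> linarith [hmvt'.1, hmvt'.2, h1'.1, h1'.2, h3'.1, h3'.2]
  have key : ∀ p ∈ S, ∀ q ∈ S, p.2 = q.2 → |(p.1 : ℝ) - (q.1 : ℝ)| ≤ b - a + 2 := by
    intro p hp q hq hpq
    rw [hS] at hp hq
    obtain ⟨-, x, hx, hp1, hp2⟩ := hp
    obtain ⟨-, y, hy, hq1, hq2⟩ := hq
    rw [hpq] at hp1 hp2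
    rcases le_total x y with hxy | hxy
    · exact key' q.2 p.1 q.1 x y hx hy hxy hp1 hp2 hq1 hq2
    · rw [abs_sub_comm]
      exact key' q.2 q.1 p.1 y x hy hx hxy hq1 hq2 hp1 hp2
  -- finiteness
  have hfin : S.Finite := by
    apply Set.Finite.subset ((Set.finite_Icc (-⌈r⌉) ⌈r⌉).prod (Set.finite_Icc (-⌈r⌉) ⌈r⌉))
    intro p hp
    rw [hS] at hp
    obtain ⟨hmax, -⟩ := hp
    have h1 : |(p.1:ℝ)| ≤ r := le_trans (le_max_left _ _) hmax
    have h2 : |(p.2:ℝ)| ≤ r := le_trans (le_max_right _ _) hmax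
    have h1' : |p.1| ≤ ⌈r⌉ := by exact_mod_cast le_trans h1 (Int.le_ceil r)
    have h2' : |p.2| ≤ ⌈r⌉ := by exact_mod_cast le_trans h2 (Int.le_ceil r)
    rw [abs_le] at h1' h2'
    simp only [Set.mem_prod, Set.mem_Icc]
    omega
  refine ⟨hfin, ?_⟩
  -- counting
  set s : Finset (ℤ × ℤ) := hfin.toFinset with hsdef
  have hmem : ∀ p, p ∈ s ↔ p ∈ S := fun p => hfin.mem_toFinset
  have hcard : S.ncard = s.card := Set.ncard_eq_toFinset_card S hfin
  set m : ℕ := Mc * β₂.natAbs + 1 with hm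
  -- fiber bound
  have hfiber : ∀ β₁ ∈ s.image Prod.snd,
      (s.filter fun p => p.2 = β₁).card ≤ 2*n+1 := by
    intro β₁ hβ₁
    obtain ⟨p₀, hp₀s, hp₀⟩ := Finset.mem_image.mp hβ₁
    have hsubcard : (s.filter fun p => p.2 = β₁).card ≤
        (Finset.Icc (p₀.1 - n) (p₀.1 + n)).card := by
      apply Finset.card_le_card_of_injOn Prod.fst
      · intro q hq
        rw [Finset.mem_coe, Finset.mem_filter] at hq
        have hkey := key q ((hmem q).mp hq.1) p₀ ((hmem p₀).mp hp₀s) (by rw [hq.2, hp₀])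
        have hle : (b - a + 2 : ℝ) ≤ (n : ℝ) := Nat.le_ceil _
        have : |(q.1 : ℝ) - (p₀.1 : ℝ)| ≤ (n:ℝ) := le_trans hkey hle
        have h2 : |q.1 - p₀.1| ≤ (n:ℤ) := by exact_mod_cast this
        rw [Finset.mem_coe, Finset.mem_Icc]
        rw [abs_le] at h2
        omega
      · intro q hq q' hq' hqq'
        rw [Finset.mem_coe, Finset.mem_filter] at hq hq'
        exact Prod.ext hqq' (hq.2.trans hq'.2.symm)
    calc (s.filter fun p => p.2 = β₁).card ≤ (Finset.Icc (p₀.1 - n) (p₀.1 + n)).card :=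
          hsubcard
      _ = 2*n+1 := by rw [Int.card_Icc]; omega
  have hcount1 : s.card ≤ (2*n+1) * (s.image Prod.snd).card :=
    Finset.card_le_mul_card_image s (2*n+1) hfiber
  -- image bound
  have himage : s.image Prod.snd ⊆ Finset.Icc (-(m:ℤ)) (m:ℤ) := by
    intro β₁ hβ₁
    obtain ⟨p, hps, hp⟩ := Finset.mem_image.mp hβ₁
    have hpS := (hmem p).mp hps
    rw [hS] at hpS
    obtain ⟨-, x, hx, -, h2⟩ := hpS
    rw [hp] at h2
    have hfx := hM x hx
    rw [Real.norm_eq_abs] at hfx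
    have h2' := abs_le.mp h2
    have hb2 : |(β₂:ℝ)| ≤ (β₂.natAbs : ℝ) := le_of_eq (by rw [Nat.cast_natAbs, Int.cast_abs])
    have hbf : |(β₂:ℝ) * deriv f x| ≤ M * β₂.natAbs := by
      rw [abs_mul]
      calc |(β₂:ℝ)| * |deriv f x| ≤ (β₂.natAbs:ℝ) * M := by
            apply mul_le_mul hb2 hfx (abs_nonneg _) (Nat.cast_nonneg _)
        _ = M * β₂.natAbs := mul_comm _ _
    have hbf' := abs_le.mp hbf
    have hMle : M ≤ (Mc : ℝ) := Nat.le_ceil M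
    have hna1 : (1:ℝ) ≤ (β₂.natAbs : ℝ) := by
      have : 1 ≤ β₂.natAbs := Int.natAbs_pos.mpr hβ₂
      exact_mod_cast this
    have hβ₁le : |(β₁:ℝ)| ≤ (Mc:ℝ) * β₂.natAbs + 1 := by
      rw [abs_le]
      have hmm : M * (β₂.natAbs:ℝ) ≤ (Mc:ℝ) * β₂.natAbs :=
        mul_le_mul_of_nonneg_right hMle (Nat.cast_nonneg _)
      constructor <;> linarith
    rw [Finset.mem_Icc]
    have hcast : ((|β₁|:ℤ):ℝ) ≤ ((m:ℤ):ℝ) := by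
      rw [Int.cast_abs]
      refine le_trans hβ₁le ?_
      rw [hm]
      push_cast
      rw [Nat.cast_natAbs, Int.cast_abs]
    have : |β₁| ≤ (m:ℤ) := by exact_mod_cast hcast
    rw [abs_le] at this; omega
  have hcount2 : (s.image Prod.snd).card ≤ 2*m+1 := by
    calc (s.image Prod.snd).card ≤ (Finset.Icc (-(m:ℤ)) (m:ℤ)).card :=
          Finset.card_le_card himage
      _ = 2*m+1 := by rw [Int.card_Icc]; omega
  have htotal : s.card ≤ (2*n+1) * (2*Mc+3) * β₂.natAbs := by
    have hna : 1 ≤ β₂.natAbs := Int.natAbs_pos.mpr hβ₂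
    calc s.card ≤ (2*n+1) * (s.image Prod.snd).card := hcount1
      _ ≤ (2*n+1) * (2*m+1) := Nat.mul_le_mul_left _ hcount2
      _ = (2*n+1) * (2*(Mc * β₂.natAbs)+3) := by rw [hm]; ring_nf
      _ ≤ (2*n+1) * ((2*Mc+3) * β₂.natAbs) := by
          apply Nat.mul_le_mul_left
          nlinarith
      _ = (2*n+1) * (2*Mc+3) * β₂.natAbs := by ring
  rw [hcard]
  have habs : |(β₂:ℝ)| = (β₂.natAbs : ℝ) := by rw [Nat.cast_natAbs, Int.cast_abs]
  rw [habs]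
  calc (s.card : ℝ) ≤ (((2*n+1) * (2*Mc+3) * β₂.natAbs : ℕ) : ℝ) := by exact_mod_cast htotal
    _ = ((2*n+1) * (2*Mc+3) : ℕ) * (β₂.natAbs : ℝ) := by push_cast; ring
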